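/- Let Q be a nonempty finite acyclic quiver, d ∈ ℕ^{Q₀} any dimension vector, and θ ∈ ℚ^{Q₀} a rational weight. Then the moment map Φ_θ : 𝒜 → Lie(K)* for the action of K = Π_a U(d_a) on the representation space 𝒜 is proper. -/

import Mathlib

open Matrix

section Aux

lemma trace_cast_aux {Q0 : Type} {d : Q0 → ℕ} {x y : Q0} (h : x = y)
    (M : Matrix (Fin (d x)) (Fin (d x)) ℂ) :
    (h ▸ M : Matrix (Fin (d y)) (Fin (d y)) ℂ).trace = M.trace := by subst h; rfl

lemma trace_dite_aux {Q0 : Type} {d : Q0 → ℕ} {x : Q0} (a : Q0) [Decidable (x = a)]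
    (M : Matrix (Fin (d x)) (Fin (d x)) ℂ) :
    (if h : x = a then (h ▸ M : Matrix (Fin (d a)) (Fin (d a)) ℂ) else 0).trace
      = if x = a then M.trace else 0 := by
  by_cases h : x = a
  · rw [dif_pos h, if_pos h, trace_cast_aux h]
  · simp [h]

lemma trace_mul_conjT {n m : ℕ} (A : Matrix (Fin n) (Fin m) ℂ) :
    (A * Aᴴ).trace = ((∑ i, ∑ j, Complex.normSq (A i j) : ℝ) : ℂ) := by
  simp [Matrix.trace, Matrix.diag, Matrix.mul_apply, Matrix.conjTranspose_apply,
    Complex.mul_conj]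

lemma trace_conjT_mul {n m : ℕ} (A : Matrix (Fin n) (Fin m) ℂ) :
    (Aᴴ * A).trace = ((∑ i, ∑ j, Complex.normSq (A i j) : ℝ) : ℂ) := by
  rw [Matrix.trace_mul_comm, trace_mul_conjT]

lemma cont_cast_aux {Q0 Q1 : Type} [Fintype Q1] {d : Q0 → ℕ} {s t : Q1 → Q0} {α : Q1} {a : Q0}
    [Decidable (t α = a)] :
    Continuous fun (ρ : ∀ α : Q1, Matrix (Fin (d (t α))) (Fin (d (s α))) ℂ) =>
      (if h : t α = a then (h ▸ (ρ α * (ρ α)ᴴ) : Matrix (Fin (d a)) (Fin (d a)) ℂ) else 0) := by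
  by_cases h : t α = a
  · simp only [dif_pos h]
    subst h
    exact (continuous_apply α).matrix_mul (continuous_apply α).matrix_conjTranspose
  · simp only [dif_neg h]; exact continuous_const

lemma cont_cast_aux2 {Q0 Q1 : Type} [Fintype Q1] {d : Q0 → ℕ} {s t : Q1 → Q0} {α : Q1} {a : Q0}
    [Decidable (s α = a)] :
    Continuous fun (ρ : ∀ α : Q1, Matrix (Fin (d (t α))) (Fin (d (s α))) ℂ) =>
      (if h : s α = a then (h ▸ ((ρ α)ᴴ * ρ α) : Matrix (Fin (d a)) (Fin (d a)) ℂ) else 0) := by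
  by_cases h : s α = a
  · simp only [dif_pos h]
    subst h
    exact (continuous_apply α).matrix_conjTranspose.matrix_mul (continuous_apply α)
  · simp only [dif_neg h]; exact continuous_const

theorem height_exists {Q0 Q1 : Type} [Fintype Q0] [Fintype Q1] [DecidableEq Q0]
    (s t : Q1 → Q0)
    (hacyclic : ¬ ∃ (l : ℕ) (c : ℕ → Q1), 1 ≤ l ∧
      (∀ i, i + 1 < l → t (c i) = s (c (i + 1))) ∧ s (c 0) = t (c (l - 1))) :
    ∃ h : Q0 → ℕ, ∀ α, h (s α) < h (t α) := by
  classical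
  set r : Q0 → Q0 → Prop := fun x y => ∃ α, s α = x ∧ t α = y with hr
  have key : ∀ a b : Q0, Relation.TransGen r a b → ∃ (l : ℕ) (c : ℕ → Q1), 1 ≤ l ∧
      (∀ i, i + 1 < l → t (c i) = s (c (i + 1))) ∧ s (c 0) = a ∧ t (c (l - 1)) = b := by
    intro a b htg
    induction htg with
    | single hab =>
      obtain ⟨α, hsα, htα⟩ := hab
      exact ⟨1, fun _ => α, le_refl 1, fun i hi => by omega, hsα, htα⟩
    | tail hab hbc ih =>
      obtain ⟨l, c, hl, hchain, hc0, hcl⟩ := ih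
      obtain ⟨α, hsα, htα⟩ := hbc
      refine ⟨l + 1, fun i => if i < l then c i else α, by omega, ?_, ?_, ?_⟩
      · intro i hi
        by_cases h1 : i + 1 < l
        · simp only [if_pos (by omega : i < l), if_pos h1]
          exact hchain i h1
        · have hil : i + 1 = l := by omega
          simp only [if_pos (by omega : i < l), if_neg (by omega : ¬ i + 1 < l)]
          have : i = l - 1 := by omega
          rw [this, hcl, hsα]
      · simp only [if_pos (by omega : 0 < l)]; exact hc0
      · simp only [Nat.add_sub_cancel, if_neg (lt_irrefl l)]; exact htα
  have hnc : ∀ a : Q0, ¬ Relation.TransGen r a a := by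
    intro a htg
    obtain ⟨l, c, hl, hchain, hc0, hcl⟩ := key a a htg
    exact hacyclic ⟨l, c, hl, hchain, by rw [hc0, hcl]⟩
  refine ⟨fun a => (Finset.univ.filter (fun b => Relation.TransGen r b a)).card, fun α => ?_⟩
  apply Finset.card_lt_card
  constructor
  · intro b hb
    simp only [Finset.mem_filter, Finset.mem_univ, true_and] at hb ⊢
    exact hb.tail ⟨α, rfl, rfl⟩
  · intro hsub
    have hmem : s α ∈ Finset.univ.filter (fun b => Relation.TransGen r b (t α)) := by
      simp only [Finset.mem_filter, Finset.mem_univ, true_and]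
      exact Relation.TransGen.single ⟨α, rfl, rfl⟩
    have := hsub hmem
    simp only [Finset.mem_filter, Finset.mem_univ, true_and] at this
    exact hnc (s α) this

end Aux

/-- The moment map `Φ_θ` for the action of `K = Π_a U(d_a)` on the representation space
`𝒜 = ⊕_α Hom(ℂ^{d(s α)}, ℂ^{d(t α)})` of a quiver, with `Lie(K)*` identified with the
space of tuples of matrices via the trace inner product:
`Φ(ρ)_a = √-1 (λ_a·id + Σ_{t α = a} ρ_α ρ_α* − Σ_{s α = a} ρ_α* ρ_α)`. -/
noncomputable def quiverMomentMap {Q0 Q1 : Type} [Fintype Q1] [DecidableEq Q0]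
    (s t : Q1 → Q0) (d : Q0 → ℕ) (lam : Q0 → ℝ)
    (ρ : ∀ α : Q1, Matrix (Fin (d (t α))) (Fin (d (s α))) ℂ) (a : Q0) :
    Matrix (Fin (d a)) (Fin (d a)) ℂ :=
  Complex.I • ((lam a : ℂ) • (1 : Matrix (Fin (d a)) (Fin (d a)) ℂ)
    + (∑ α : Q1, if h : t α = a then h ▸ (ρ α * (ρ α)ᴴ) else 0)
    - (∑ α : Q1, if h : s α = a then h ▸ ((ρ α)ᴴ * ρ α) else 0))

section Aux2

variable {Q0 Q1 : Type} [Fintype Q1] [DecidableEq Q0]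
  (s t : Q1 → Q0) (d : Q0 → ℕ) (lam : Q0 → ℝ)

lemma phi_cont : Continuous (quiverMomentMap s t d lam) := by
  apply continuous_pi; intro a
  unfold quiverMomentMap
  refine (continuous_const_smul Complex.I).comp ?_
  apply Continuous.sub
  · exact Continuous.add continuous_const
      (continuous_finset_sum _ fun α _ => cont_cast_aux)
  · exact continuous_finset_sum _ fun α _ => cont_cast_aux2

omit [Fintype Q1] [DecidableEq Q0] in
lemma trace_cont (a : Q0) :
    Continuous fun m : (∀ a : Q0, Matrix (Fin (d a)) (Fin (d a)) ℂ) => (m a).trace := by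
  show Continuous fun m : (∀ a : Q0, Matrix (Fin (d a)) (Fin (d a)) ℂ) => ∑ i, m a i i
  exact continuous_finset_sum _ fun i _ =>
    (continuous_apply i).comp ((continuous_apply (A := fun _ => Fin (d a) → ℂ) i).comp
      (continuous_apply a))

lemma trace_phi (ρ : ∀ α : Q1, Matrix (Fin (d (t α))) (Fin (d (s α))) ℂ) (a : Q0) :
    ((quiverMomentMap s t d lam ρ) a).trace
      = Complex.I * ((lam a * d a
          + (∑ α, if t α = a then ∑ i, ∑ j, Complex.normSq (ρ α i j) else 0)
          - (∑ α, if s α = a then ∑ i, ∑ j, Complex.normSq (ρ α i j) else 0) : ℝ) : ℂ) := by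
  unfold quiverMomentMap
  rw [Matrix.trace_smul, smul_eq_mul]
  congr 1
  rw [Matrix.trace_sub, Matrix.trace_add, Matrix.trace_smul, Matrix.trace_one,
      Matrix.trace_sum, Matrix.trace_sum]
  simp only [trace_dite_aux, trace_mul_conjT, trace_conjT_mul]
  push_cast [Fintype.card_fin, apply_ite (fun z : ℝ => (z : ℂ)), smul_eq_mul]
  ring_nf

end Aux2

/-- For a nonempty finite acyclic quiver, any dimension vector `d` and rational weight
`θ`, the moment map `Φ_θ` (with `λ_a = θ_a − μ_θ(d)`) is proper. -/
theorem moment_map_proper_of_acyclic {Q0 Q1 : Type} [Fintype Q0] [Fintype Q1]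
    [DecidableEq Q0] [Nonempty Q0] (s t : Q1 → Q0) (d : Q0 → ℕ) (θ : Q0 → ℚ)
    (lam : Q0 → ℝ)
    (hlam : ∀ a, lam a = (θ a : ℝ) - (∑ b, (θ b : ℝ) * d b) / (∑ b, (d b : ℝ)))
    (hacyclic : ¬ ∃ (l : ℕ) (c : ℕ → Q1), 1 ≤ l ∧
      (∀ i, i + 1 < l → t (c i) = s (c (i + 1))) ∧ s (c 0) = t (c (l - 1))) :
    ∀ K : Set (∀ a : Q0, Matrix (Fin (d a)) (Fin (d a)) ℂ), IsCompact K →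
      IsCompact (quiverMomentMap s t d lam ⁻¹' K) := by
  classical
  obtain ⟨h, hh⟩ := height_exists s t hacyclic
  intro K hK
  -- the abbreviations
  set Φ := quiverMomentMap s t d lam with hΦ
  set E : (∀ α : Q1, Matrix (Fin (d (t α))) (Fin (d (s α))) ℂ) → Q1 → ℝ :=
    fun ρ α => ∑ i, ∑ j, Complex.normSq (ρ α i j) with hEdef
  set g : (∀ a : Q0, Matrix (Fin (d a)) (Fin (d a)) ℂ) → ℝ :=
    fun m => ∑ a, (h a : ℝ) * (-Complex.I * (m a).trace).re with hgdef
  have gcont : Continuous g := by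
    apply continuous_finset_sum
    intro a _
    exact (continuous_const.mul (Complex.continuous_re.comp
      (continuous_const.mul (trace_cont d a))))
  set c0 : ℝ := ∑ a, (h a : ℝ) * (lam a * d a) with hc0def
  have gval : ∀ ρ, g (Φ ρ) = c0 + ∑ α, ((h (t α) : ℝ) - h (s α)) * E ρ α := by
    intro ρ
    have step1 : g (Φ ρ) = ∑ a, (h a : ℝ) * (lam a * d a
        + (∑ α, if t α = a then E ρ α else 0)
        - (∑ α, if s α = a then E ρ α else 0)) := by
      apply Finset.sum_congr rfl
      intro a _
      rw [hΦ, trace_phi s t d lam ρ a]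
      congr 1
      rw [← mul_assoc, neg_mul, Complex.I_mul_I, neg_neg, one_mul, Complex.ofReal_re]
    rw [step1]
    have swap : ∀ f : Q1 → Q0,
        (∑ a, (h a : ℝ) * ∑ α, (if f α = a then E ρ α else 0))
          = ∑ α, (h (f α) : ℝ) * E ρ α := by
      intro f
      simp_rw [Finset.mul_sum, mul_ite, mul_zero]
      rw [Finset.sum_comm]
      apply Finset.sum_congr rfl
      intro α _
      simp [Finset.sum_ite_eq]
    simp_rw [mul_sub, mul_add]
    rw [Finset.sum_sub_distrib, Finset.sum_add_distrib, swap t, swap s, hc0def]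
    rw [add_sub_assoc, ← Finset.sum_sub_distrib]
    congr 1
    apply Finset.sum_congr rfl
    intro α _
    ring
  -- bound on K
  obtain ⟨C, hC⟩ := hK.exists_bound_of_continuousOn gcont.continuousOn
  set R : ℝ := Real.sqrt (C + |c0|) with hRdef
  have hEnneg : ∀ ρ α, 0 ≤ E ρ α := by
    intro ρ α
    apply Finset.sum_nonneg; intro i _
    apply Finset.sum_nonneg; intro j _
    exact Complex.normSq_nonneg _
  have hbound : ∀ ρ ∈ Φ ⁻¹' K, ∀ α (i : Fin (d (t α))) (j : Fin (d (s α))),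
      ‖ρ α i j‖ ≤ R := by
    intro ρ hρ α i j
    have h1 : g (Φ ρ) ≤ C := le_trans (le_abs_self _) (hC _ hρ)
    rw [gval] at h1
    have h2 : ∑ α, E ρ α ≤ ∑ α, ((h (t α) : ℝ) - h (s α)) * E ρ α := by
      apply Finset.sum_le_sum
      intro α _
      have hge : (1 : ℝ) ≤ (h (t α) : ℝ) - h (s α) := by
        have := hh α
        have : (h (s α) : ℝ) + 1 ≤ h (t α) := by exact_mod_cast this
        linarith
      nlinarith [hEnneg ρ α]
    have h3 : ∑ α', E ρ α' ≤ C + |c0| := by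
      have := neg_abs_le c0
      linarith
    have h4 : E ρ α ≤ C + |c0| :=
      le_trans (Finset.single_le_sum (fun α' _ => hEnneg ρ α') (Finset.mem_univ α)) h3
    have h5 : Complex.normSq (ρ α i j) ≤ E ρ α := by
      refine le_trans ?_ (Finset.single_le_sum
        (f := fun i => ∑ j, Complex.normSq (ρ α i j))
        (fun i _ => Finset.sum_nonneg fun j _ => Complex.normSq_nonneg _)
        (Finset.mem_univ i))
      exact Finset.single_le_sum (fun j _ => Complex.normSq_nonneg _) (Finset.mem_univ j)
    have : ‖ρ α i j‖ = Real.sqrt (Complex.normSq (ρ α i j)) := by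
      rw [Complex.norm_def]
    rw [this, hRdef]
    exact Real.sqrt_le_sqrt (le_trans h5 h4)
  -- the compact box
  set S : Set (∀ α : Q1, Matrix (Fin (d (t α))) (Fin (d (s α))) ℂ) :=
    Set.univ.pi (fun α : Q1 => Set.univ.pi (fun i : Fin (d (t α)) =>
      Set.univ.pi (fun _ : Fin (d (s α)) => Metric.closedBall (0 : ℂ) R))) with hSdef
  have hScomp : IsCompact S := by
    apply isCompact_univ_pi
    intro α
    apply isCompact_univ_pi
    intro i
    exact isCompact_univ_pi fun j => isCompact_closedBall 0 R
  have hsub : Φ ⁻¹' K ⊆ S := by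
    intro ρ hρ
    rw [hSdef]
    intro α _
    intro i _
    intro j _
    rw [Metric.mem_closedBall, dist_zero_right]
    exact hbound ρ hρ α i j
  have hclosed : IsClosed (Φ ⁻¹' K) := hK.isClosed.preimage (phi_cont s t d lam)
  exact hScomp.of_isClosed_subset hclosed hsub
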